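/- Let E be a complete random normed module over ℝ and u ∈ E* an element with full support (i.e., ‖u‖ > 0 a.e. on Ω). Then for every ξ ∈ L⁰(F) there exists x₀ ∈ E with u(x₀) = ξ. -/

import Mathlib

open MeasureTheory Filter Topology ENNReal
open scoped Classical

namespace RandomNormed

variable {Ω : Type*} [MeasurableSpace Ω] {μ : Measure Ω}

/-! `Ω →ₘ[μ] ℝ` is our model of `L⁰(F)`: equivalence classes of real random variables.
We equip it with its (pointwise a.e.) commutative ring structure. -/

noncomputable instance : NatCast (Ω →ₘ[μ] ℝ) := ⟨fun n => AEEqFun.const Ω (n : ℝ)⟩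
noncomputable instance : IntCast (Ω →ₘ[μ] ℝ) := ⟨fun n => AEEqFun.const Ω (n : ℝ)⟩

theorem natCast_toGerm (n : ℕ) : ((n : Ω →ₘ[μ] ℝ)).toGerm = n := by
  show (AEEqFun.const Ω (n:ℝ)).toGerm = _
  rw [AEEqFun.const, AEEqFun.mk_toGerm]; rfl

theorem intCast_toGerm (n : ℤ) : ((n : Ω →ₘ[μ] ℝ)).toGerm = n := by
  show (AEEqFun.const Ω (n:ℝ)).toGerm = _
  rw [AEEqFun.const, AEEqFun.mk_toGerm]; rfl

noncomputable instance : CommRing (Ω →ₘ[μ] ℝ) :=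
  AEEqFun.toGerm_injective.commRing AEEqFun.toGerm AEEqFun.zero_toGerm AEEqFun.one_toGerm
    AEEqFun.add_toGerm AEEqFun.mul_toGerm AEEqFun.neg_toGerm AEEqFun.sub_toGerm
    (fun _ _ => AEEqFun.smul_toGerm _ _) (fun _ _ => AEEqFun.smul_toGerm _ _)
    AEEqFun.pow_toGerm natCast_toGerm intCast_toGerm

/-- The Ky Fan functional `ξ ↦ ∫ (|ξ| ∧ 1) dμ`: it metrizes the `(ε,λ)`-topology, i.e. the
topology of convergence in probability, on `L⁰(F) = Ω →ₘ[μ] ℝ`. -/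
noncomputable def dP (μ : Measure Ω) (ξ : Ω →ₘ[μ] ℝ) : ℝ≥0∞ :=
  ∫⁻ ω, ENNReal.ofReal (min |ξ ω| 1) ∂μ

section RN

variable {E : Type*} [AddCommGroup E] [Module (Ω →ₘ[μ] ℝ) E]

/-- `nrm` is an `L⁰`-norm on the `L⁰(F)`-module `E`. -/
def IsRNNorm (nrm : E → Ω →ₘ[μ] ℝ) : Prop :=
  (∀ x, 0 ≤ nrm x) ∧ (∀ (ξ : Ω →ₘ[μ] ℝ) (x : E), nrm (ξ • x) = |ξ| * nrm x) ∧
    (∀ x y, nrm (x + y) ≤ nrm x + nrm y) ∧ (∀ x, nrm x = 0 → x = 0)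

/-- Completeness of the random normed module `(E, nrm)` with respect to the
`(ε,λ)`-topology: every Cauchy (in probability) sequence converges in probability. -/
def IsCompleteRN (nrm : E → Ω →ₘ[μ] ℝ) : Prop :=
  ∀ x : ℕ → E,
    (∀ ε : ℝ≥0∞, 0 < ε → ∃ N, ∀ m, N ≤ m → ∀ n, N ≤ n → dP μ (nrm (x m - x n)) < ε) →
    ∃ l : E, Tendsto (fun n => dP μ (nrm (x n - l))) atTop (nhds 0)

/-- The random normed module `(E, nrm)` has full support: on no set of positive measure
do all the norms vanish. -/
def HasFullSupport (nrm : E → Ω →ₘ[μ] ℝ) : Prop :=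
  ∀ A : Set Ω, MeasurableSet A → μ A ≠ 0 → ∃ x : E, ¬ (∀ᵐ ω ∂μ, ω ∈ A → nrm x ω = 0)

/-- An `L⁰`-linear functional is a.s. bounded (equivalently, continuous), i.e. a member of
the random conjugate space `E*`. -/
def IsBoundedLF (nrm : E → Ω →ₘ[μ] ℝ) (u : E →ₗ[Ω →ₘ[μ] ℝ] (Ω →ₘ[μ] ℝ)) : Prop :=
  ∃ ξ : Ω →ₘ[μ] ℝ, 0 ≤ ξ ∧ ∀ x, |u x| ≤ ξ * nrm x

/-- `s` is the supremum in `L̄⁰(F)` (with the a.e. order) of the set `S` of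
(representatives of) extended-real-valued random variables. -/
def IsAESup (μ : Measure Ω) (S : Set (Ω → EReal)) (s : Ω → EReal) : Prop :=
  (∀ g ∈ S, ∀ᵐ ω ∂μ, g ω ≤ s ω) ∧
    ∀ b : Ω → EReal, AEMeasurable b μ → (∀ g ∈ S, ∀ᵐ ω ∂μ, g ω ≤ b ω) →
      ∀ᵐ ω ∂μ, s ω ≤ b ω

/-- `f : E → L̄⁰(F)` (in representative form) is a proper lower semicontinuous `L⁰`-convex
function: a.e.-measurable values, nowhere `-∞`, somewhere finite, `L⁰`-convex, and with
an epigraph that is (sequentially) closed in the `(ε,λ)`-topology of `E × L⁰(F)`. -/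
def IsCvxFn (nrm : E → Ω →ₘ[μ] ℝ) (f : E → Ω → EReal) : Prop :=
  (∀ x, AEMeasurable (f x) μ) ∧
  (∀ x, ∀ᵐ ω ∂μ, ⊥ < f x ω) ∧
  (∃ x, ∀ᵐ ω ∂μ, f x ω < ⊤) ∧
  (∀ ξ : Ω →ₘ[μ] ℝ, 0 ≤ ξ → ξ ≤ 1 → ∀ x y : E,
    ∀ᵐ ω ∂μ, f (ξ • x + (1 - ξ) • y) ω ≤
      ((ξ ω : ℝ) : EReal) * f x ω + (((1 - ξ : Ω →ₘ[μ] ℝ) ω : ℝ) : EReal) * f y ω) ∧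
  (∀ (x : ℕ → E) (r : ℕ → Ω →ₘ[μ] ℝ) (x₀ : E) (r₀ : Ω →ₘ[μ] ℝ),
    (∀ n, ∀ᵐ ω ∂μ, f (x n) ω ≤ ((r n ω : ℝ) : EReal)) →
    Tendsto (fun n => dP μ (nrm (x n - x₀))) atTop (nhds 0) →
    Tendsto (fun n => dP μ (r n - r₀)) atTop (nhds 0) →
    ∀ᵐ ω ∂μ, f x₀ ω ≤ ((r₀ ω : ℝ) : EReal))

/-- The class `𝒞(E)` of proper lower semicontinuous `L⁰`-convex functions on `E`. -/
def CvxFn (nrm : E → Ω →ₘ[μ] ℝ) := {f : E → Ω → EReal // IsCvxFn nrm f}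

/-- The pointwise a.e. order on functions `E → L̄⁰(F)`. -/
def CleFn (μ : Measure Ω) (f g : E → Ω → EReal) : Prop := ∀ x : E, ∀ᵐ ω ∂μ, f x ω ≤ g x ω

/-- Pointwise a.e. equality of functions `E → L̄⁰(F)` (i.e. equality in `L̄⁰`). -/
def CeqFn (μ : Measure Ω) (f g : E → Ω → EReal) : Prop := ∀ x : E, ∀ᵐ ω ∂μ, f x ω = g x ω

/-- `T` is a stable operator on `𝒞(E)`: `T(Ĩ_A f + Ĩ_{A^c} g) = Ĩ_A T(f) + Ĩ_{A^c} T(g)`. -/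
def IsStableOp (nrm : E → Ω →ₘ[μ] ℝ) (T : CvxFn nrm → CvxFn nrm) : Prop :=
  ∀ A : Set Ω, MeasurableSet A → ∀ f g h : CvxFn nrm,
    (∀ x : E, ∀ᵐ ω ∂μ, h.1 x ω = if ω ∈ A then f.1 x ω else g.1 x ω) →
    (∀ x : E, ∀ᵐ ω ∂μ, (T h).1 x ω = if ω ∈ A then (T f).1 x ω else (T g).1 x ω)

/-- `T : 𝒞(E) → 𝒞(E)` is fully order preserving: `f ≤ g ↔ T f ≤ T g`, and `T` is onto
(up to equality in `L̄⁰`, i.e. pointwise a.e. equality). -/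
def IsFullyOrderPreserving (nrm : E → Ω →ₘ[μ] ℝ)
    (T : CvxFn nrm → CvxFn nrm) : Prop :=
  (∀ f g : CvxFn nrm, CleFn μ f.1 g.1 ↔ CleFn μ (T f).1 (T g).1) ∧
    ∀ g : CvxFn nrm, ∃ f : CvxFn nrm, CeqFn μ (T f).1 g.1

end RN

section AuxSurj

variable {Ω : Type*} [MeasurableSpace Ω] {μ : Measure Ω}

private theorem meas_min (f : Ω →ₘ[μ] ℝ) :
    Measurable fun ω => ENNReal.ofReal (min |f ω| 1) :=
  ENNReal.measurable_ofReal.comp ((f.measurable.abs).min measurable_const)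

private theorem dP_le_measure {f : Ω →ₘ[μ] ℝ} {A : Set Ω} (hA : MeasurableSet A)
    (h : ∀ᵐ ω ∂μ, ω ∉ A → f ω = 0) : dP μ f ≤ μ A := by
  rw [← lintegral_indicator_one hA]
  refine lintegral_mono_ae ?_
  filter_upwards [h] with ω hω
  by_cases hmem : ω ∈ A
  · simp only [Set.indicator_of_mem hmem]
    exact ENNReal.ofReal_le_one.2 (min_le_right _ _)
  · simp [hmem, hω hmem]

private theorem eq_zero_of_dP_eq_zero {f : Ω →ₘ[μ] ℝ} (h : dP μ f = 0) : f = 0 := by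
  rw [dP, lintegral_eq_zero_iff (meas_min f)] at h
  refine AEEqFun.ext ?_
  filter_upwards [h, AEEqFun.coeFn_zero (β := ℝ) (μ := μ)] with ω hω h0
  have h1 : min |f ω| 1 ≤ 0 := ENNReal.ofReal_eq_zero.1 hω
  rw [h0]
  rcases le_total |f ω| 1 with h2 | h2
  · rw [min_eq_left h2] at h1
    exact abs_eq_zero.1 (le_antisymm h1 (abs_nonneg _))
  · rw [min_eq_right h2] at h1; norm_num at h1

private theorem dP_le_add {f g h : Ω →ₘ[μ] ℝ} (hfg : ∀ᵐ ω ∂μ, |h ω| ≤ |f ω| + |g ω|) :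
    dP μ h ≤ dP μ f + dP μ g := by
  have key : dP μ h ≤ ∫⁻ ω, (ENNReal.ofReal (min |f ω| 1) + ENNReal.ofReal (min |g ω| 1)) ∂μ := by
    refine lintegral_mono_ae ?_
    filter_upwards [hfg] with ω hω
    have hf0 : (0:ℝ) ≤ min |f ω| 1 := le_min (abs_nonneg _) zero_le_one
    have hg0 : (0:ℝ) ≤ min |g ω| 1 := le_min (abs_nonneg _) zero_le_one
    rw [← ENNReal.ofReal_add hf0 hg0]
    refine ENNReal.ofReal_le_ofReal ?_
    rcases le_total |f ω| 1 with h1 | h1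
    · rcases le_total |g ω| 1 with h2 | h2
      · calc min |h ω| 1 ≤ |h ω| := min_le_left _ _
          _ ≤ |f ω| + |g ω| := hω
          _ = min |f ω| 1 + min |g ω| 1 := by rw [min_eq_left h1, min_eq_left h2]
      · calc min |h ω| 1 ≤ 1 := min_le_right _ _
          _ = min |g ω| 1 := (min_eq_right h2).symm
          _ ≤ min |f ω| 1 + min |g ω| 1 := le_add_of_nonneg_left hf0
    · calc min |h ω| 1 ≤ 1 := min_le_right _ _
        _ = min |f ω| 1 := (min_eq_right h1).symm
        _ ≤ min |f ω| 1 + min |g ω| 1 := le_add_of_nonneg_right hg0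
  rw [lintegral_add_left (meas_min f)] at key
  exact key

private theorem dP_mul_tendsto [IsFiniteMeasure μ] (ξ₀ : Ω →ₘ[μ] ℝ) {f : ℕ → Ω →ₘ[μ] ℝ}
    (h : Tendsto (fun n => dP μ (f n)) atTop (𝓝 0))
    {g : ℕ → Ω →ₘ[μ] ℝ} (hg : ∀ n, ∀ᵐ ω ∂μ, |g n ω| ≤ |ξ₀ ω| * |f n ω|) :
    Tendsto (fun n => dP μ (g n)) atTop (𝓝 0) := by
  rw [ENNReal.tendsto_nhds_zero]
  intro ε hε
  have hε2 : (0:ℝ≥0∞) < ε / 2 := ENNReal.half_pos hε.ne'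
  set S : ℕ → Set Ω := fun M => {ω | (M:ℝ) < |ξ₀ ω|} with hS
  have hSm : ∀ M, MeasurableSet (S M) :=
    fun M => measurableSet_lt measurable_const ξ₀.measurable.abs
  have hSanti : Antitone S := by
    intro a b hab ω hω
    have hab' : (a:ℝ) ≤ b := Nat.cast_le.mpr hab
    exact lt_of_le_of_lt hab' hω
  have hInter : ⋂ M, S M = ∅ := by
    ext ω
    simp only [Set.mem_iInter, Set.mem_empty_iff_false, iff_false, not_forall]
    obtain ⟨M, hM⟩ := exists_nat_gt |ξ₀ ω|
    exact ⟨M, not_lt.2 hM.le⟩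
  have htend : Tendsto (fun M => μ (S M)) atTop (𝓝 0) := by
    have h2 := tendsto_measure_iInter_atTop (fun M => (hSm M).nullMeasurableSet) hSanti
      ⟨0, measure_ne_top μ _⟩
    rwa [hInter, measure_empty] at h2
  obtain ⟨M, hM⟩ := (htend.eventually_lt_const hε2).exists
  set C : ℝ := M + 1 with hC
  have hC1 : (1:ℝ) ≤ C := by
    have : (0:ℝ) ≤ M := Nat.cast_nonneg M
    linarith
  set C' : ℝ≥0∞ := ENNReal.ofReal C with hC'
  have hC'top : C' ≠ ⊤ := ENNReal.ofReal_ne_top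
  have hbound : ∀ n, dP μ (g n) ≤ μ (S M) + C' * dP μ (f n) := by
    intro n
    have key : dP μ (g n) ≤
        ∫⁻ ω, ((S M).indicator (1 : Ω → ℝ≥0∞) ω + C' * ENNReal.ofReal (min |f n ω| 1)) ∂μ := by
      refine lintegral_mono_ae ?_
      filter_upwards [hg n] with ω hω
      by_cases hmem : ω ∈ S M
      · calc ENNReal.ofReal (min |g n ω| 1) ≤ 1 := ENNReal.ofReal_le_one.2 (min_le_right _ _)
          _ ≤ _ := by rw [Set.indicator_of_mem hmem]; exact le_add_of_nonneg_right zero_le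
      · rw [Set.indicator_of_notMem hmem, zero_add]
        have hξM : |ξ₀ ω| ≤ M := not_lt.1 hmem
        have h1 : |g n ω| ≤ C * |f n ω| := by
          calc |g n ω| ≤ |ξ₀ ω| * |f n ω| := hω
            _ ≤ C * |f n ω| := by
              apply mul_le_mul_of_nonneg_right _ (abs_nonneg _)
              linarith
        have h2 : min |g n ω| 1 ≤ C * min |f n ω| 1 := by
          rcases le_total |f n ω| 1 with h3 | h3
          · rw [min_eq_left h3]
            calc min |g n ω| 1 ≤ |g n ω| := min_le_left _ _
              _ ≤ C * |f n ω| := h1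
          · rw [min_eq_right h3]
            calc min |g n ω| 1 ≤ 1 := min_le_right _ _
              _ ≤ C * 1 := by linarith
        calc ENNReal.ofReal (min |g n ω| 1) ≤ ENNReal.ofReal (C * min |f n ω| 1) :=
              ENNReal.ofReal_le_ofReal h2
          _ = C' * ENNReal.ofReal (min |f n ω| 1) := ENNReal.ofReal_mul (by linarith)
    rw [lintegral_add_left (measurable_one.indicator (hSm M)),
      lintegral_indicator_one (hSm M), lintegral_const_mul _ (meas_min (f n))] at key
    exact key
  have hδ : (0:ℝ≥0∞) < ε / 2 / C' := ENNReal.div_pos hε2.ne' hC'top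
  filter_upwards [(ENNReal.tendsto_nhds_zero.1 h) _ hδ] with n hn
  calc dP μ (g n) ≤ μ (S M) + C' * dP μ (f n) := hbound n
    _ ≤ ε / 2 + C' * (ε / 2 / C') := add_le_add hM.le (mul_le_mul_right hn _)
    _ ≤ ε / 2 + ε / 2 := add_le_add_right ENNReal.mul_div_le _
    _ = ε := ENNReal.add_halves ε

/-- The indicator of a measurable set as an element of `L⁰`. -/
private noncomputable def indL (μ : Measure Ω) (A : Set Ω) (hA : MeasurableSet A) :
    Ω →ₘ[μ] ℝ :=
  AEEqFun.mk (A.indicator fun _ => (1:ℝ))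
    ((measurable_const.indicator hA).aestronglyMeasurable)

private theorem indL_coeFn (A : Set Ω) (hA : MeasurableSet A) :
    ⇑(indL μ A hA) =ᵐ[μ] A.indicator fun _ => (1:ℝ) :=
  AEEqFun.coeFn_mk _ _

private theorem coeFn_finsum {ι : Type*} (s : Finset ι) (f : ι → Ω →ₘ[μ] ℝ) :
    ⇑(∑ i ∈ s, f i) =ᵐ[μ] fun ω => ∑ i ∈ s, f i ω := by
  classical
  induction s using Finset.induction_on with
  | empty =>
    filter_upwards [AEEqFun.coeFn_zero (β := ℝ) (μ := μ)] with ω h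
    simpa using h
  | @insert a s ha ih =>
    rw [Finset.sum_insert ha]
    filter_upwards [AEEqFun.coeFn_add (f a) (∑ i ∈ s, f i), ih] with ω h1 h2
    rw [Finset.sum_insert ha, h1, Pi.add_apply, h2]

section Mod

variable {E : Type*} [AddCommGroup E] [Module (Ω →ₘ[μ] ℝ) E] {nrm : E → Ω →ₘ[μ] ℝ}

private theorem nrm_zero (hnrm : IsRNNorm nrm) : nrm 0 = 0 := by
  have h := hnrm.2.1 0 0
  rw [zero_smul] at h
  rw [h]
  have habs : |(0 : Ω →ₘ[μ] ℝ)| = 0 := by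
    refine AEEqFun.ext ?_
    filter_upwards [AEEqFun.coeFn_abs (0 : Ω →ₘ[μ] ℝ), AEEqFun.coeFn_zero (β := ℝ) (μ := μ)]
      with ω h1 h2
    rw [h1, h2]
    simp
  rw [habs, zero_mul]

private theorem L0_add_le_add_left {a b c : Ω →ₘ[μ] ℝ} (h : a ≤ b) : c + a ≤ c + b := by
  rw [← AEEqFun.coeFn_le] at h ⊢
  filter_upwards [h, AEEqFun.coeFn_add c a, AEEqFun.coeFn_add c b] with ω h1 h2 h3
  rw [h2, h3, Pi.add_apply, Pi.add_apply]
  exact add_le_add_right h1 _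

private theorem nrm_sum_le (hnrm : IsRNNorm nrm) {ι : Type*} (s : Finset ι) (f : ι → E) :
    nrm (∑ i ∈ s, f i) ≤ ∑ i ∈ s, nrm (f i) := by
  classical
  induction s using Finset.induction_on with
  | empty => simp [nrm_zero hnrm]
  | @insert a s ha ih =>
    rw [Finset.sum_insert ha, Finset.sum_insert ha]
    calc nrm (f a + ∑ i ∈ s, f i) ≤ nrm (f a) + nrm (∑ i ∈ s, f i) := hnrm.2.2.1 _ _
      _ ≤ nrm (f a) + ∑ i ∈ s, nrm (f i) := L0_add_le_add_left ih

end Mod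

end AuxSurj

section UnionStep

variable {Ω : Type*} [MeasurableSpace Ω] {μ : Measure Ω}

private theorem union_step [IsProbabilityMeasure μ]
    {E : Type*} [AddCommGroup E] [Module (Ω →ₘ[μ] ℝ) E]
    {nrm : E → Ω →ₘ[μ] ℝ} (hnrm : IsRNNorm nrm) (hcomplete : IsCompleteRN nrm)
    (u : E →ₗ[Ω →ₘ[μ] ℝ] (Ω →ₘ[μ] ℝ)) (ξ₀ : Ω →ₘ[μ] ℝ)
    (hξ₀ : ∀ x, |u x| ≤ ξ₀ * nrm x)
    (B : ℕ → Set Ω) (hBm : ∀ k, MeasurableSet (B k)) (hdisj : Pairwise (Function.onFun Disjoint B))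
    (x : ℕ → E) (hx : ∀ k, u (x k) = indL μ (B k) (hBm k)) :
    ∃ y : E, u y = indL μ (⋃ k, B k) (MeasurableSet.iUnion hBm) := by
  classical
  set y : ℕ → E := fun k => indL μ (B k) (hBm k) • x k with hy
  set s : ℕ → E := fun n => ∑ k ∈ Finset.range n, y k with hs
  set U : Set Ω := ⋃ k, B k with hU
  have hUm : MeasurableSet U := MeasurableSet.iUnion hBm
  set T : ℕ → Set Ω := fun n => ⋃ k, B (k + n) with hT
  have hTm : ∀ n, MeasurableSet (T n) := fun n => MeasurableSet.iUnion fun k => hBm _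
  have hdisj' : ∀ n, Pairwise (Function.onFun Disjoint fun k => B (k + n)) := by
    intro n i j hij
    simp only [Function.onFun]
    exact hdisj (by omega : i + n ≠ j + n)
  have hTμ : ∀ n, μ (T n) = ∑' k, μ (B (k + n)) := fun n =>
    measure_iUnion (hdisj' n) fun k => hBm _
  have hsum_ne_top : ∑' k, μ (B k) ≠ ⊤ := by
    rw [← measure_iUnion hdisj hBm]
    exact measure_ne_top μ _
  have hTtend : Tendsto (fun n => μ (T n)) atTop (𝓝 0) := by
    simp only [hTμ]
    exact ENNReal.tendsto_sum_nat_add _ hsum_ne_top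
  have hind : ∀ᵐ ω ∂μ, ∀ k, (indL μ (B k) (hBm k)) ω = (B k).indicator (fun _ => (1:ℝ)) ω :=
    ae_all_iff.2 fun k => indL_coeFn _ _
  have hnrm_y : ∀ᵐ ω ∂μ, ∀ k, (|indL μ (B k) (hBm k)| * nrm (x k)) ω
      = (B k).indicator (fun _ => (1:ℝ)) ω * (nrm (x k)) ω := by
    rw [ae_all_iff]
    intro k
    filter_upwards [AEEqFun.coeFn_mul (|indL μ (B k) (hBm k)|) (nrm (x k)),
      AEEqFun.coeFn_abs (indL μ (B k) (hBm k)), indL_coeFn (B k) (hBm k)] with ω h1 h2 h3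
    rw [h1, Pi.mul_apply, h2, h3]
    congr 1
    by_cases hω : ω ∈ B k <;> simp [hω]
  have hu_s : ∀ n, u (s n) = ∑ k ∈ Finset.range n, indL μ (B k) (hBm k) := by
    intro n
    simp only [hs, hy]
    rw [map_sum]
    refine Finset.sum_congr rfl fun k _ => ?_
    rw [u.map_smul, hx k, smul_eq_mul]
    refine AEEqFun.ext ?_
    filter_upwards [AEEqFun.coeFn_mul (indL μ (B k) (hBm k)) (indL μ (B k) (hBm k)),
      indL_coeFn (B k) (hBm k)] with ω h1 h2
    rw [h1, Pi.mul_apply, h2]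
    by_cases hω : ω ∈ B k <;> simp [hω]
  have hae_diff : ∀ n, ∀ᵐ ω ∂μ, ω ∉ T n → (u (s n) - indL μ U hUm) ω = 0 := by
    intro n
    filter_upwards [AEEqFun.coeFn_sub (u (s n)) (indL μ U hUm), hind, indL_coeFn U hUm,
      coeFn_finsum (Finset.range n) (fun k => indL μ (B k) (hBm k))] with ω hsub hik hiU hsum hωT
    rw [hsub, Pi.sub_apply]
    have husn : (u (s n)) ω = ∑ k ∈ Finset.range n, (B k).indicator (fun _ => (1:ℝ)) ω := by
      rw [hu_s n, hsum]
      exact Finset.sum_congr rfl fun k _ => hik k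
    by_cases hωU : ω ∈ U
    · obtain ⟨j, hj⟩ := Set.mem_iUnion.1 hωU
      have hjn : j < n := by
        by_contra hjn
        push_neg at hjn
        exact hωT (Set.mem_iUnion.2 ⟨j - n, by rwa [Nat.sub_add_cancel hjn]⟩)
      rw [husn, hiU, Set.indicator_of_mem hωU]
      have hone : ∑ k ∈ Finset.range n, (B k).indicator (fun _ => (1:ℝ)) ω = 1 := by
        rw [Finset.sum_eq_single j]
        · simp [hj]
        · intro k _ hkj
          have hωB : ω ∉ B k := fun hc => Set.disjoint_left.mp (hdisj hkj) hc hj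
          simp [hωB]
        · intro hj'
          exact absurd (Finset.mem_range.2 hjn) hj'
      rw [hone]
      ring
    · rw [husn, hiU, Set.indicator_of_notMem hωU]
      have hz : ∀ k ∈ Finset.range n, (B k).indicator (fun _ => (1:ℝ)) ω = 0 := fun k _ =>
        Set.indicator_of_notMem (fun hc => hωU (Set.mem_iUnion.2 ⟨k, hc⟩)) _
      rw [Finset.sum_congr rfl hz]
      simp
  have hαtend : Tendsto (fun n => dP μ (u (s n) - indL μ U hUm)) atTop (𝓝 0) := by
    have hb : ∀ n, dP μ (u (s n) - indL μ U hUm) ≤ μ (T n) := fun n =>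
      dP_le_measure (hTm n) (hae_diff n)
    exact tendsto_of_tendsto_of_tendsto_of_le_of_le tendsto_const_nhds hTtend
      (fun n => zero_le) hb
  have hnonneg : ∀ᵐ ω ∂μ, ∀ m n : ℕ, 0 ≤ (nrm (s m - s n)) ω := by
    rw [ae_all_iff]
    intro m
    rw [ae_all_iff]
    intro n
    filter_upwards [AEEqFun.coeFn_le.2 (hnrm.1 (s m - s n)),
      AEEqFun.coeFn_zero (β := ℝ) (μ := μ)] with ω h1 h2
    rw [h2] at h1
    exact h1
  have hbound : ∀ N m n : ℕ, N ≤ n → n ≤ m → ∀ᵐ ω ∂μ, ω ∉ T N → (nrm (s m - s n)) ω = 0 := by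
    intro N m n hNn hnm
    have hdiff : s m - s n = ∑ k ∈ Finset.Ico n m, y k := by
      simp only [hs]
      exact (Finset.sum_Ico_eq_sub _ hnm).symm
    have hle : nrm (s m - s n) ≤ ∑ k ∈ Finset.Ico n m, |indL μ (B k) (hBm k)| * nrm (x k) := by
      rw [hdiff]
      calc nrm (∑ k ∈ Finset.Ico n m, y k) ≤ ∑ k ∈ Finset.Ico n m, nrm (y k) :=
            nrm_sum_le hnrm _ _
        _ = ∑ k ∈ Finset.Ico n m, |indL μ (B k) (hBm k)| * nrm (x k) := by
            refine Finset.sum_congr rfl fun k _ => ?_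
            simp only [hy]
            exact hnrm.2.1 _ _
    filter_upwards [AEEqFun.coeFn_le.2 hle, hnonneg, hnrm_y,
      coeFn_finsum (Finset.Ico n m) (fun k => |indL μ (B k) (hBm k)| * nrm (x k))]
      with ω h1 h2 h3 h4 hωT
    have hzero : ∀ k ∈ Finset.Ico n m, (|indL μ (B k) (hBm k)| * nrm (x k)) ω = 0 := by
      intro k hk
      rw [h3 k]
      have hωB : ω ∉ B k := by
        intro hc
        have hNk : N ≤ k := le_trans hNn (Finset.mem_Ico.1 hk).1
        exact hωT (Set.mem_iUnion.2 ⟨k - N, by rwa [Nat.sub_add_cancel hNk]⟩)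
      simp [Set.indicator_of_notMem hωB]
    have hle0 : (nrm (s m - s n)) ω ≤ 0 := by
      calc (nrm (s m - s n)) ω
          ≤ (∑ k ∈ Finset.Ico n m, |indL μ (B k) (hBm k)| * nrm (x k)) ω := h1
        _ = ∑ k ∈ Finset.Ico n m, (|indL μ (B k) (hBm k)| * nrm (x k)) ω := h4
        _ = 0 := Finset.sum_eq_zero hzero
    exact le_antisymm hle0 (h2 m n)
  have hcauchy : ∀ ε : ℝ≥0∞, 0 < ε →
      ∃ N, ∀ m, N ≤ m → ∀ n, N ≤ n → dP μ (nrm (s m - s n)) < ε := by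
    intro ε hε
    obtain ⟨N, hN⟩ := (hTtend.eventually_lt_const hε).exists
    refine ⟨N, fun m hm n hn => ?_⟩
    rcases le_total n m with h | h
    · exact lt_of_le_of_lt (dP_le_measure (hTm N) (hbound N m n hn h)) hN
    · have heq : nrm (s m - s n) = nrm (s n - s m) := by
        have hneg : s m - s n = (-1 : Ω →ₘ[μ] ℝ) • (s n - s m) := by
          rw [neg_one_smul, neg_sub]
        rw [hneg, hnrm.2.1]
        have habs : |(-1 : Ω →ₘ[μ] ℝ)| = 1 := by
          refine AEEqFun.ext ?_
          filter_upwards [AEEqFun.coeFn_abs (-1 : Ω →ₘ[μ] ℝ),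
            AEEqFun.coeFn_neg (1 : Ω →ₘ[μ] ℝ), AEEqFun.coeFn_one (β := ℝ) (μ := μ)]
            with ω h1 h2 h3
          rw [h1, h2, Pi.neg_apply, h3]
          norm_num
        rw [habs, one_mul]
      rw [heq]
      exact lt_of_le_of_lt (dP_le_measure (hTm N) (hbound N n m hm h)) hN
  obtain ⟨l, hl⟩ := hcomplete s hcauchy
  have hutend : Tendsto (fun n => dP μ (u (s n) - u l)) atTop (𝓝 0) := by
    refine dP_mul_tendsto ξ₀ hl ?_
    intro n
    have hmap : u (s n) - u l = u (s n - l) := (map_sub u _ _).symm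
    filter_upwards [AEEqFun.coeFn_le.2 (hξ₀ (s n - l)), AEEqFun.coeFn_abs (u (s n - l)),
      AEEqFun.coeFn_mul ξ₀ (nrm (s n - l))] with ω h1 h2 h3
    rw [hmap]
    calc |(u (s n - l)) ω| = |u (s n - l)| ω := h2.symm
      _ ≤ (ξ₀ * nrm (s n - l)) ω := h1
      _ = ξ₀ ω * (nrm (s n - l)) ω := by rw [h3, Pi.mul_apply]
      _ ≤ |ξ₀ ω * (nrm (s n - l)) ω| := le_abs_self _
      _ = |ξ₀ ω| * |(nrm (s n - l)) ω| := abs_mul _ _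
  refine ⟨l, ?_⟩
  have hfinal : ∀ n, dP μ (indL μ U hUm - u l) ≤
      dP μ (u (s n) - indL μ U hUm) + dP μ (u (s n) - u l) := by
    intro n
    refine dP_le_add ?_
    filter_upwards [AEEqFun.coeFn_sub (indL μ U hUm) (u l),
      AEEqFun.coeFn_sub (u (s n)) (indL μ U hUm), AEEqFun.coeFn_sub (u (s n)) (u l)]
      with ω h1 h2 h3
    rw [h1, h2, h3, Pi.sub_apply, Pi.sub_apply, Pi.sub_apply]
    have hring : (indL μ U hUm) ω - (u l) ω
        = -((u (s n)) ω - (indL μ U hUm) ω) + ((u (s n)) ω - (u l) ω) := by ring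
    rw [hring]
    refine le_trans (abs_add_le _ _) ?_
    rw [abs_neg]
  have hdPzero : dP μ (indL μ U hUm - u l) = 0 := by
    have hsumtend : Tendsto
        (fun n => dP μ (u (s n) - indL μ U hUm) + dP μ (u (s n) - u l)) atTop (𝓝 0) := by
      simpa using hαtend.add hutend
    have hle0 := ge_of_tendsto' hsumtend hfinal
    exact le_antisymm hle0 zero_le
  have hzero := eq_zero_of_dP_eq_zero hdPzero
  exact (sub_eq_zero.1 hzero).symm

end UnionStep

section Step1

variable {Ω : Type*} [MeasurableSpace Ω] {μ : Measure Ω}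

private theorem step1
    {E : Type*} [AddCommGroup E] [Module (Ω →ₘ[μ] ℝ) E] {nrm : E → Ω →ₘ[μ] ℝ}
    (u : E →ₗ[Ω →ₘ[μ] ℝ] (Ω →ₘ[μ] ℝ)) (ξ₀ : Ω →ₘ[μ] ℝ) (hξ₀pos : 0 ≤ ξ₀)
    (hξ₀ : ∀ x, |u x| ≤ ξ₀ * nrm x)
    (hfullu : ∀ ξ : Ω →ₘ[μ] ℝ, 0 ≤ ξ → (∀ x : E, |u x| ≤ ξ * nrm x) →
      ∀ᵐ ω ∂μ, 0 < ξ ω)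
    (A : Set Ω) (hA : MeasurableSet A) (hμA : μ A ≠ 0) :
    ∃ B : Set Ω, ∃ hB : MeasurableSet B, B ⊆ A ∧ μ B ≠ 0 ∧ ∃ x : E, u x = indL μ B hB := by
  classical
  have key : ∃ x : E, ¬ ∀ᵐ ω ∂μ, ω ∈ A → (u x) ω = 0 := by
    by_contra hno
    push_neg at hno
    have hpos0 : ∀ᵐ ω ∂μ, 0 ≤ ξ₀ ω := by
      filter_upwards [AEEqFun.coeFn_le.2 hξ₀pos, AEEqFun.coeFn_zero (β := ℝ) (μ := μ)]
        with ω h1 h2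
      rw [h2] at h1
      exact h1
    have h0 : (0 : Ω →ₘ[μ] ℝ) ≤ indL μ Aᶜ hA.compl * ξ₀ := by
      rw [← AEEqFun.coeFn_le]
      filter_upwards [AEEqFun.coeFn_mul (indL μ Aᶜ hA.compl) ξ₀, indL_coeFn Aᶜ hA.compl,
        hpos0, AEEqFun.coeFn_zero (β := ℝ) (μ := μ)] with ω h1 h2 h3 h4
      rw [h4, h1, Pi.mul_apply, h2]
      by_cases hω : ω ∈ Aᶜ <;> simp [hω, h3]
    have hbd : ∀ x, |u x| ≤ (indL μ Aᶜ hA.compl * ξ₀) * nrm x := by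
      intro x
      rw [← AEEqFun.coeFn_le]
      filter_upwards [hno x, AEEqFun.coeFn_le.2 (hξ₀ x), AEEqFun.coeFn_abs (u x),
        AEEqFun.coeFn_mul (indL μ Aᶜ hA.compl * ξ₀) (nrm x),
        AEEqFun.coeFn_mul ξ₀ (nrm x),
        AEEqFun.coeFn_mul (indL μ Aᶜ hA.compl) ξ₀, indL_coeFn Aᶜ hA.compl]
        with ω h1 h2 h3 h4 h5 h6 h7
      rw [h3, h4, Pi.mul_apply, h6, Pi.mul_apply, h7]
      by_cases hω : ω ∈ A
      · rw [h1 hω, Set.indicator_of_notMem (by simpa using hω), abs_zero, zero_mul, zero_mul]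
      · rw [Set.indicator_of_mem (by simpa using hω), one_mul]
        rw [h3, h5, Pi.mul_apply] at h2
        exact h2
    have hposae := hfullu _ h0 hbd
    have hnotA : ∀ᵐ ω ∂μ, ω ∉ A := by
      filter_upwards [hposae, AEEqFun.coeFn_mul (indL μ Aᶜ hA.compl) ξ₀,
        indL_coeFn Aᶜ hA.compl] with ω h1 h2 h3
      intro hω
      rw [h2, Pi.mul_apply, h3, Set.indicator_of_notMem (by simpa using hω), zero_mul] at h1
      exact lt_irrefl _ h1
    have hA0 : μ A = 0 := by
      have h := ae_iff.1 hnotA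
      simp only [not_not] at h
      rwa [Set.setOf_mem_eq] at h
    exact hμA hA0
  obtain ⟨x, hxkey⟩ := key
  have hBmeas : MeasurableSet (A ∩ {ω | (u x) ω ≠ 0}) := by
    apply hA.inter
    have h2 := ((u x).measurable (measurableSet_singleton (0:ℝ))).compl
    have hset : {ω | (u x) ω ≠ 0} = ((⇑(u x)) ⁻¹' {0})ᶜ := by
      ext ω
      simp
    rw [hset]
    exact h2
  have hμB : μ (A ∩ {ω | (u x) ω ≠ 0}) ≠ 0 := by
    intro hzero
    apply hxkey
    rw [ae_iff]
    convert hzero using 2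
    ext ω
    simp [_root_.not_imp, Set.mem_inter_iff]
  have hinvmeas : Measurable ((A ∩ {ω | (u x) ω ≠ 0}).indicator fun ω => ((u x) ω)⁻¹) :=
    ((u x).measurable.inv).indicator hBmeas
  refine ⟨A ∩ {ω | (u x) ω ≠ 0}, hBmeas, Set.inter_subset_left, hμB,
    (AEEqFun.mk _ hinvmeas.aestronglyMeasurable : Ω →ₘ[μ] ℝ) • x, ?_⟩
  rw [u.map_smul, smul_eq_mul]
  refine AEEqFun.ext ?_
  filter_upwards [AEEqFun.coeFn_mul (AEEqFun.mk _ hinvmeas.aestronglyMeasurable : Ω →ₘ[μ] ℝ) (u x),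
    AEEqFun.coeFn_mk (μ := μ) _ hinvmeas.aestronglyMeasurable,
    indL_coeFn (A ∩ {ω | (u x) ω ≠ 0}) hBmeas] with ω h1 h2 h3
  rw [h1, Pi.mul_apply, h2, h3]
  by_cases hω : ω ∈ A ∩ {ω | (u x) ω ≠ 0}
  · rw [Set.indicator_of_mem hω, Set.indicator_of_mem hω]
    exact inv_mul_cancel₀ hω.2
  · rw [Set.indicator_of_notMem hω, Set.indicator_of_notMem hω, zero_mul]

end Step1

/-- If `u ∈ E*` has full support (every a.s. bound `ξ` for `u`, i.e. `|u(x)| ≤ ξ‖x‖`,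
is a.e. strictly positive, which says `‖u‖ > 0` a.e.), then `u` is onto `L⁰(F)`. -/
theorem full_support_functional_is_surjective
    {Ω : Type*} [MeasurableSpace Ω] {μ : Measure Ω} [IsProbabilityMeasure μ]
    {E : Type*} [AddCommGroup E] [Module (Ω →ₘ[μ] ℝ) E]
    (nrm : E → Ω →ₘ[μ] ℝ) (hnrm : IsRNNorm nrm) (hcomplete : IsCompleteRN nrm)
    (u : E →ₗ[Ω →ₘ[μ] ℝ] (Ω →ₘ[μ] ℝ)) (hu : IsBoundedLF nrm u)
    (hfullu : ∀ ξ : Ω →ₘ[μ] ℝ, 0 ≤ ξ → (∀ x : E, |u x| ≤ ξ * nrm x) →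
      ∀ᵐ ω ∂μ, 0 < ξ ω) :
    ∀ ξ : Ω →ₘ[μ] ℝ, ∃ x₀ : E, u x₀ = ξ := by
  intro ξ
  classical
  obtain ⟨ξ₀, hξ₀pos, hξ₀bd⟩ := hu
  set P : Set Ω → Prop := fun B => ∃ hB : MeasurableSet B, ∃ x : E, u x = indL μ B hB with hP
  have hPempty : P ∅ := by
    refine ⟨MeasurableSet.empty, 0, ?_⟩
    rw [map_zero]
    refine (AEEqFun.ext ?_).symm
    filter_upwards [indL_coeFn (∅ : Set Ω) MeasurableSet.empty,
      AEEqFun.coeFn_zero (β := ℝ) (μ := μ)] with ω h1 h2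
    rw [h1, h2]
    simp
  have hInterP : ∀ (A : Set Ω), MeasurableSet A → ∀ B, P B → P (A ∩ B) := by
    rintro A hA B ⟨hBm, x, hx⟩
    refine ⟨hA.inter hBm, indL μ A hA • x, ?_⟩
    rw [u.map_smul, hx, smul_eq_mul]
    refine AEEqFun.ext ?_
    filter_upwards [AEEqFun.coeFn_mul (indL μ A hA) (indL μ B hBm), indL_coeFn A hA,
      indL_coeFn B hBm, indL_coeFn (A ∩ B) (hA.inter hBm)] with ω h1 h2 h3 h4
    rw [h1, Pi.mul_apply, h2, h3, h4]
    by_cases hωA : ω ∈ A <;> by_cases hωB : ω ∈ B <;>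
      simp [hωA, hωB, Set.indicator_apply, Set.mem_inter_iff]
  have hUnionP : ∀ (B : ℕ → Set Ω), (∀ n, P (B n)) → P (⋃ n, B n) := by
    intro B hPB
    choose hBm xB hxB using hPB
    set D : ℕ → Set Ω := fun n => (⋃ (i : ℕ) (_ : i < n), B i)ᶜ ∩ B n with hD
    have hDP : ∀ n, P (D n) := fun n =>
      hInterP _ (MeasurableSet.iUnion fun i =>
        MeasurableSet.iUnion fun _ => hBm i).compl _ ⟨hBm n, xB n, hxB n⟩
    have hDdisj : Pairwise (Function.onFun Disjoint D) := by
      intro i j hij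
      rcases hij.lt_or_gt with h | h
      · exact Set.disjoint_left.2 fun ω hi hj => hj.1 (Set.mem_biUnion h hi.2)
      · exact Set.disjoint_right.2 fun ω hj hi => hi.1 (Set.mem_biUnion h hj.2)
    have hDU : ⋃ n, D n = ⋃ n, B n := by
      apply Set.Subset.antisymm
      · exact Set.iUnion_mono fun n => Set.inter_subset_right
      · intro ω hω
        obtain ⟨n, hn⟩ := Set.mem_iUnion.1 hω
        have hex : ∃ n, ω ∈ B n := ⟨n, hn⟩
        refine Set.mem_iUnion.2 ⟨Nat.find hex, ⟨?_, Nat.find_spec hex⟩⟩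
        intro hc
        simp only [Set.mem_iUnion] at hc
        obtain ⟨i, hi, hωi⟩ := hc
        exact (Nat.find_min hex hi) hωi
    choose hDm2 xD hxD using hDP
    obtain ⟨y, hy⟩ := union_step hnrm hcomplete u ξ₀ hξ₀bd D hDm2 hDdisj xD hxD
    refine ⟨MeasurableSet.iUnion hBm, y, ?_⟩
    rw [hy]
    refine AEEqFun.ext ?_
    filter_upwards [indL_coeFn _ (MeasurableSet.iUnion hDm2),
      indL_coeFn _ (MeasurableSet.iUnion hBm)] with ω h1 h2
    rw [h1, h2, hDU]
  set SS : Set ℝ≥0∞ := (fun B => μ B) '' {B | P B} with hSS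
  have hSSne : SS.Nonempty := ⟨μ ∅, ⟨∅, hPempty, rfl⟩⟩
  have hSSbdd : BddAbove SS := OrderTop.bddAbove SS
  obtain ⟨v, hvmono, hvtend, hvmem⟩ := exists_seq_tendsto_sSup hSSne hSSbdd
  have hvmem' : ∀ n, ∃ B, P B ∧ μ B = v n := fun n => (Set.mem_image _ _ _).1 (hvmem n)
  choose Bseq hBseqP hBseqμ using hvmem'
  set Bstar : Set Ω := ⋃ n, Bseq n with hBstar
  have hPBstar : P Bstar := hUnionP _ hBseqP
  obtain ⟨hBstarm, xstar, hxstar⟩ := hPBstar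
  have hμBstar_le : μ Bstar ≤ sSup SS := le_sSup ⟨Bstar, ⟨hBstarm, xstar, hxstar⟩, rfl⟩
  have hsSup_le : sSup SS ≤ μ Bstar := by
    refine le_of_tendsto hvtend (Filter.Eventually.of_forall fun n => ?_)
    rw [← hBseqμ n]
    exact measure_mono (Set.subset_iUnion Bseq n)
  have hμcompl : μ Bstarᶜ = 0 := by
    by_contra hc
    obtain ⟨B', hB'm, hB'sub, hB'μ, x', hx'⟩ :=
      step1 u ξ₀ hξ₀pos hξ₀bd hfullu Bstarᶜ hBstarm.compl hc
    have hPB' : P B' := ⟨hB'm, x', hx'⟩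
    set F : ℕ → Set Ω := fun n => if n = 0 then Bstar else B' with hF
    have hPF : ∀ n, P (F n) := by
      intro n
      by_cases hn : n = 0
      · simpa [hF, hn] using ⟨hBstarm, xstar, hxstar⟩
      · simpa [hF, hn] using hPB'
    have hFU : ⋃ n, F n = Bstar ∪ B' := by
      ext ω
      simp only [Set.mem_iUnion, Set.mem_union, hF]
      constructor
      · rintro ⟨n, hn⟩
        by_cases h0 : n = 0
        · left; simpa [h0] using hn
        · right; simpa [h0] using hn
      · rintro (h | h)
        · exact ⟨0, by simpa using h⟩
        · exact ⟨1, by simpa using h⟩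
    have hPU : P (Bstar ∪ B') := hFU ▸ hUnionP F hPF
    obtain ⟨hUm', xU, hxU⟩ := hPU
    have hle : μ (Bstar ∪ B') ≤ sSup SS := le_sSup ⟨_, ⟨hUm', xU, hxU⟩, rfl⟩
    have hdisjBB : Disjoint Bstar B' := Set.disjoint_left.2 fun ω hω hω' => (hB'sub hω') hω
    have haddμ : μ (Bstar ∪ B') = μ Bstar + μ B' := measure_union hdisjBB hB'm
    have hcontra : μ B' ≤ 0 := by
      apply ENNReal.le_of_add_le_add_left (measure_ne_top μ Bstar)
      rw [add_zero]
      calc μ Bstar + μ B' = μ (Bstar ∪ B') := haddμ.symm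
        _ ≤ sSup SS := hle
        _ ≤ μ Bstar := hsSup_le
    exact hB'μ (le_antisymm hcontra zero_le)
  have hind1 : indL μ Bstar hBstarm = 1 := by
    refine AEEqFun.ext ?_
    have hmem : ∀ᵐ ω ∂μ, ω ∈ Bstar := by
      rw [ae_iff]
      exact hμcompl
    filter_upwards [hmem, indL_coeFn Bstar hBstarm, AEEqFun.coeFn_one (β := ℝ) (μ := μ)]
      with ω h1 h2 h3
    rw [h2, h3, Set.indicator_of_mem h1]
    simp
  refine ⟨ξ • xstar, ?_⟩
  rw [u.map_smul, hxstar, hind1, smul_eq_mul, mul_one]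


end RandomNormed
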